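/- Let d ≥ 2 and N ≥ 1 be integers. Then (1/d²) · ∑_{λ, λ' ∈ Λ} √(q_λ) · √(q_{λ'}) · S(λ, λ') ≥ 1 − 2π²(d−1)²/(d² N²). -/

import Mathlib

/-- The distribution `g_k := (2/N) sin²(π(2k+1)/(2N))`. -/
noncomputable def sineDist (N k : ℕ) : ℝ :=
  (2 / (N : ℝ)) * Real.sin (Real.pi * (2 * (k : ℝ) + 1) / (2 * (N : ℝ))) ^ 2

/-- The product distribution `q_λ := ∏_{i=1}^{d−1} g_{λ_i}` on `Λ = {0,…,N−1}^{d−1}`. -/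
noncomputable def prodDist (d N : ℕ) (lam : Fin (d - 1) → ℕ) : ℝ :=
  ∏ t : Fin (d - 1), sineDist N (lam t)

/-- The score matrix: `S(λ,λ') = d` if `λ = λ'`; `S(λ,λ') = 1` if the integer vector
`λ − λ'` equals `±e_i` for some `i` or `e_i − e_j` for some `i ≠ j`; `S(λ,λ') = 0`
otherwise. -/
noncomputable def score (d : ℕ) (lam lam' : Fin (d - 1) → ℕ) : ℝ :=
  if lam = lam' then (d : ℝ)
  else if (∃ i, ∀ t, (lam t : ℤ) - (lam' t : ℤ) = if t = i then 1 else 0)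
      ∨ (∃ i, ∀ t, (lam t : ℤ) - (lam' t : ℤ) = if t = i then -1 else 0)
      ∨ (∃ i j, i ≠ j ∧ ∀ t, (lam t : ℤ) - (lam' t : ℤ)
            = if t = i then 1 else if t = j then -1 else 0)
    then 1 else 0

open Finset Real

noncomputable def rEF (N k : ℕ) : ℝ := Real.sqrt (sineDist N k)

noncomputable def BEF (N : ℕ) : ℝ := ∑ k ∈ range (N - 1), rEF N k * rEF N (k + 1)

noncomputable def gfEF (N : ℕ) : ℕ → ℝ := fun k => rEF N k * rEF N k

noncomputable def hmEF (N : ℕ) : ℕ → ℝ := fun k => if 1 ≤ k then rEF N k * rEF N (k - 1) else 0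

noncomputable def hpEF (N : ℕ) : ℕ → ℝ := fun k => if k + 1 < N then rEF N k * rEF N (k + 1) else 0

lemma sineDist_nonneg (N k : ℕ) : 0 ≤ sineDist N k := by unfold sineDist; positivity

lemma rEF_sq (N k : ℕ) : rEF N k * rEF N k = sineDist N k :=
  Real.mul_self_sqrt (sineDist_nonneg N k)

section Analytic

lemma cos_sum_EF (N : ℕ) (hN : 2 ≤ N) :
    ∑ k ∈ range N, Real.cos (Real.pi * (2 * (k : ℝ) + 1) / N) = 0 := by
  have hN0 : (N : ℝ) ≠ 0 := by positivity
  have key : ∀ k : ℕ, Real.sin (2 * Real.pi * (k + 1 : ℝ) / N) - Real.sin (2 * Real.pi * (k : ℝ) / N)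
      = 2 * Real.sin (Real.pi / N) * Real.cos (Real.pi * (2 * (k : ℝ) + 1) / N) := by
    intro k
    rw [Real.sin_sub_sin]
    congr 1
    · congr 1
      field_simp; ring
    · congr 1
      field_simp; ring
  have tel : ∑ k ∈ range N, (Real.sin (2 * Real.pi * ((k : ℝ) + 1) / N) - Real.sin (2 * Real.pi * (k : ℝ) / N)) = 0 := by
    have := Finset.sum_range_sub (fun k => Real.sin (2 * Real.pi * (k : ℝ) / N)) N
    simp only [Nat.cast_add, Nat.cast_one] at this ⊢
    rw [this]
    rw [mul_div_assoc, div_self hN0]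
    simp [Real.sin_two_pi]
  have h2 : 2 * Real.sin (Real.pi / N) * ∑ k ∈ range N, Real.cos (Real.pi * (2 * (k : ℝ) + 1) / N) = 0 := by
    rw [Finset.mul_sum]
    rw [← tel]
    exact Finset.sum_congr rfl fun k _ => (key k).symm
  have hs : Real.sin (Real.pi / N) ≠ 0 := by
    have h1 : 0 < Real.pi / N := by positivity
    have h2' : Real.pi / N < Real.pi := by
      rw [div_lt_iff₀ (by positivity)]
      have h2N : (2:ℝ) ≤ N := by exact_mod_cast hN
      nlinarith [Real.pi_pos]
    exact ne_of_gt (Real.sin_pos_of_pos_of_lt_pi h1 h2')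
  rcases mul_eq_zero.1 h2 with h | h
  · exact absurd h (mul_ne_zero two_ne_zero hs)
  · exact h

lemma sum_sineDist (N : ℕ) (hN : 2 ≤ N) : ∑ k ∈ range N, sineDist N k = 1 := by
  have hN0 : (N : ℝ) ≠ 0 := by positivity
  have hrw : ∀ k : ℕ, sineDist N k = 1 / N - Real.cos (Real.pi * (2 * (k : ℝ) + 1) / N) / N := by
    intro k
    unfold sineDist
    rw [Real.sin_sq, Real.cos_sq]
    have : 2 * (Real.pi * (2 * (k : ℝ) + 1) / (2 * N)) = Real.pi * (2 * (k : ℝ) + 1) / N := by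
      field_simp
    rw [this]
    field_simp
    ring
  rw [Finset.sum_congr rfl fun k _ => hrw k, Finset.sum_sub_distrib, Finset.sum_const,
    Finset.card_range, ← Finset.sum_div, cos_sum_EF N hN]
  simp [nsmul_eq_mul, hN0]

lemma rEF_eq (N k : ℕ) (hk : k < N) :
    rEF N k = Real.sqrt (2 / N) * Real.sin (Real.pi * (2 * (k : ℝ) + 1) / (2 * N)) := by
  have hNpos : 0 < N := by omega
  have hN0 : (0:ℝ) < N := by exact_mod_cast hNpos
  have hθ0 : 0 ≤ Real.pi * (2 * (k : ℝ) + 1) / (2 * N) := by positivity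
  have hθ1 : Real.pi * (2 * (k : ℝ) + 1) / (2 * N) ≤ Real.pi := by
    rw [div_le_iff₀ (by positivity)]
    have : (2 * (k:ℝ) + 1) ≤ 2 * N := by
      have : (k:ℝ) + 1 ≤ N := by exact_mod_cast hk
      linarith
    nlinarith [Real.pi_pos]
  unfold rEF sineDist
  rw [Real.sqrt_mul (by positivity), Real.sqrt_sq (Real.sin_nonneg_of_nonneg_of_le_pi hθ0 hθ1)]

lemma B_ge (N : ℕ) (hN : 2 ≤ N) : 1 - Real.pi ^ 2 / (N:ℝ) ^ 2 ≤ BEF N := by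
  have hN0 : (0:ℝ) < N := by positivity
  set s : ℝ := Real.pi / (2 * N) with hs_def
  have hs0 : 0 ≤ s := by positivity
  have h1N : (1:ℝ) ≤ N := by
    have : 1 ≤ N := by omega
    exact_mod_cast this
  have hsin0 : 0 ≤ Real.sin s := Real.sin_nonneg_of_nonneg_of_le_pi hs0 (by
    rw [hs_def, div_le_iff₀ (by positivity)]
    nlinarith [Real.pi_pos, mul_le_mul_of_nonneg_left h1N (le_of_lt Real.pi_pos)])
  have hsin_le : Real.sin s ^ 2 ≤ s ^ 2 := by
    have := Real.sin_le hs0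
    nlinarith
  have hdiff : ∀ k : ℕ, k + 1 < N →
      (rEF N (k+1) - rEF N k) ^ 2 ≤ 8 / N * Real.sin s ^ 2 := by
    intro k hk
    rw [rEF_eq N k (by omega), rEF_eq N (k+1) hk]
    push_cast
    have hsq : Real.sqrt (2 / (N:ℝ)) ^ 2 = 2 / N := Real.sq_sqrt (by positivity)
    set θ0 : ℝ := Real.pi * (2 * (k:ℝ) + 1) / (2 * N) with hθ0
    set θ1 : ℝ := Real.pi * (2 * ((k:ℝ) + 1) + 1) / (2 * N) with hθ1
    have hsub : Real.sin θ1 - Real.sin θ0 = 2 * Real.sin s * Real.cos ((θ1 + θ0) / 2) := by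
      rw [Real.sin_sub_sin]
      congr 2
      rw [hs_def, hθ0, hθ1]
      field_simp
      ring
    set c : ℝ := Real.cos ((θ1 + θ0) / 2) with hc
    have hc2 : c ^ 2 ≤ 1 := Real.cos_sq_le_one _
    have e1 : (Real.sqrt (2/(N:ℝ)) * Real.sin θ1 - Real.sqrt (2/(N:ℝ)) * Real.sin θ0) ^ 2
        = Real.sqrt (2/(N:ℝ)) ^ 2 * (Real.sin θ1 - Real.sin θ0) ^ 2 := by ring
    rw [e1, hsq, hsub]
    have e2 : 2 / (N:ℝ) * (2 * Real.sin s * c) ^ 2 = 8 / N * Real.sin s ^ 2 * c ^ 2 := by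
      ring
    rw [e2]
    have h80 : (0:ℝ) ≤ 8 / N * Real.sin s ^ 2 := by positivity
    nlinarith [mul_nonneg h80 (sub_nonneg.2 hc2)]
  have hterm : ∀ k ∈ range (N - 1),
      sineDist N k / 2 + sineDist N (k+1) / 2 - 4 / N * Real.sin s ^ 2
        ≤ rEF N k * rEF N (k+1) := by
    intro k hk
    rw [Finset.mem_range] at hk
    have h1 := hdiff k (by omega)
    have h2 := rEF_sq N k
    have h3 := rEF_sq N (k+1)
    have hexp2 : (rEF N (k+1) - rEF N k) ^ 2
        = rEF N (k+1) * rEF N (k+1) - 2 * (rEF N k * rEF N (k+1)) + rEF N k * rEF N k := by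
      ring
    rw [h2, h3] at hexp2
    have h48 : 8 / (N:ℝ) * Real.sin s ^ 2 = 2 * (4 / N * Real.sin s ^ 2) := by ring
    linarith
  have hlow := Finset.sum_le_sum hterm
  have eN : N - 1 + 1 = N := by omega
  have hsum1 : ∑ k ∈ range (N-1), sineDist N k = 1 - sineDist N (N-1) := by
    have h2 := Finset.sum_range_succ (fun k => sineDist N k) (N-1)
    rw [eN] at h2
    have h := sum_sineDist N hN
    linarith [h, h2]
  have hsum2 : ∑ k ∈ range (N-1), sineDist N (k+1) = 1 - sineDist N 0 := by
    have h2 := Finset.sum_range_succ' (fun k => sineDist N k) (N-1)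
    rw [eN] at h2
    have h := sum_sineDist N hN
    linarith [h, h2]
  have hg0 : sineDist N 0 = 2 / N * Real.sin s ^ 2 := by
    unfold sineDist
    rw [hs_def]; norm_num
  have hgN : sineDist N (N-1) = 2 / N * Real.sin s ^ 2 := by
    unfold sineDist
    have hcast : ((N - 1 : ℕ) : ℝ) = (N:ℝ) - 1 := by
      have : 1 ≤ N := by omega
      push_cast [this]; ring
    rw [hcast]
    have hang : Real.pi * (2 * ((N:ℝ) - 1) + 1) / (2 * N) = Real.pi - s := by
      rw [hs_def]; field_simp; ring
    rw [hang, Real.sin_pi_sub]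
  have hLHS : ∑ k ∈ range (N-1), (sineDist N k / 2 + sineDist N (k+1) / 2 - 4 / N * Real.sin s ^ 2)
      = 1 - 2 / N * Real.sin s ^ 2 - ((N:ℝ) - 1) * (4 / N * Real.sin s ^ 2) := by
    rw [Finset.sum_sub_distrib, Finset.sum_add_distrib, ← Finset.sum_div, ← Finset.sum_div,
      hsum1, hsum2, hg0, hgN, Finset.sum_const, Finset.card_range]
    have hcast : ((N - 1 : ℕ) : ℝ) = (N:ℝ) - 1 := by
      have : 1 ≤ N := by omega
      push_cast [this]; ring
    rw [nsmul_eq_mul, hcast]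
    ring
  have hfinal : 1 - 4 * Real.sin s ^ 2
      ≤ 1 - 2 / N * Real.sin s ^ 2 - ((N:ℝ) - 1) * (4 / N * Real.sin s ^ 2) := by
    have hsin_sq : 0 ≤ Real.sin s ^ 2 := sq_nonneg _
    have hN2 : (2:ℝ) ≤ N := by exact_mod_cast hN
    have hco : 2 / N * Real.sin s ^ 2 + ((N:ℝ) - 1) * (4 / N * Real.sin s ^ 2)
        = (4 - 2 / N) * Real.sin s ^ 2 := by field_simp; ring
    nlinarith [div_pos (by norm_num : (0:ℝ) < 2) hN0]
  have hss : 4 * s ^ 2 = Real.pi ^ 2 / N ^ 2 := by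
    rw [hs_def]; field_simp; ring
  unfold BEF
  calc 1 - Real.pi ^ 2 / (N:ℝ) ^ 2 = 1 - 4 * s ^ 2 := by rw [hss]
    _ ≤ 1 - 4 * Real.sin s ^ 2 := by nlinarith
    _ ≤ _ := le_trans (le_trans hfinal (le_of_eq hLHS.symm)) hlow

end Analytic

section Comb

variable {d N : ℕ}

lemma cp_iff (i : Fin (d-1)) (a b : Fin (d-1) → ℕ) :
    (∀ t, (a t : ℤ) - b t = if t = i then 1 else 0)
      ↔ 1 ≤ a i ∧ b = Function.update a i (a i - 1) := by
  constructor
  · intro h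
    have hi := h i
    rw [if_pos rfl] at hi
    have h1 : 1 ≤ a i := by omega
    refine ⟨h1, funext fun t => ?_⟩
    rcases eq_or_ne t i with rfl | hne
    · rw [Function.update_self]
      omega
    · rw [Function.update_of_ne hne]
      have ht := h t
      rw [if_neg hne] at ht
      omega
  · rintro ⟨h1, rfl⟩ t
    rcases eq_or_ne t i with rfl | hne
    · rw [if_pos rfl, Function.update_self]
      omega
    · rw [if_neg hne, Function.update_of_ne hne]
      omega

lemma cm_iff (i : Fin (d-1)) (a b : Fin (d-1) → ℕ) :
    (∀ t, (a t : ℤ) - b t = if t = i then -1 else 0)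
      ↔ b = Function.update a i (a i + 1) := by
  constructor
  · intro h
    funext t
    rcases eq_or_ne t i with rfl | hne
    · rw [Function.update_self]
      have hi := h t
      rw [if_pos rfl] at hi
      omega
    · rw [Function.update_of_ne hne]
      have ht := h t
      rw [if_neg hne] at ht
      omega
  · rintro rfl t
    rcases eq_or_ne t i with rfl | hne
    · rw [if_pos rfl, Function.update_self]
      omega
    · rw [if_neg hne, Function.update_of_ne hne]
      omega

lemma cpm_iff {i j : Fin (d-1)} (hij : i ≠ j) (a b : Fin (d-1) → ℕ) :
    (∀ t, (a t : ℤ) - b t = if t = i then 1 else if t = j then -1 else 0)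
      ↔ 1 ≤ a i ∧ b = Function.update (Function.update a i (a i - 1)) j (a j + 1) := by
  constructor
  · intro h
    have hi := h i
    rw [if_pos rfl] at hi
    have h1 : 1 ≤ a i := by omega
    refine ⟨h1, funext fun t => ?_⟩
    rcases eq_or_ne t j with rfl | hnej
    · rw [Function.update_self]
      have ht := h t
      rw [if_neg (fun hh => hij hh.symm), if_pos rfl] at ht
      omega
    · rw [Function.update_of_ne hnej]
      rcases eq_or_ne t i with rfl | hnei
      · rw [Function.update_self]
        omega
      · rw [Function.update_of_ne hnei]
        have ht := h t
        rw [if_neg hnei, if_neg hnej] at ht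
        omega
  · rintro ⟨h1, rfl⟩ t
    rcases eq_or_ne t j with rfl | hnej
    · rw [if_neg (fun hh => hij hh.symm), if_pos rfl, Function.update_self]
      omega
    · rw [Function.update_of_ne hnej]
      rcases eq_or_ne t i with rfl | hnei
      · rw [if_pos rfl, Function.update_self]
        omega
      · rw [if_neg hnei, if_neg hnej, Function.update_of_ne hnei]
        omega

lemma score_eq (d : ℕ) (a b : Fin (d-1) → ℕ) :
    score d a b = (if a = b then (d:ℝ) else 0)
      + (∑ i : Fin (d-1), if ∀ t, (a t:ℤ) - b t = (if t = i then 1 else 0) then (1:ℝ) else 0)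
      + (∑ i : Fin (d-1), if ∀ t, (a t:ℤ) - b t = (if t = i then -1 else 0) then (1:ℝ) else 0)
      + (∑ i : Fin (d-1), ∑ j : Fin (d-1), if i ≠ j ∧ ∀ t, (a t:ℤ) - b t
            = (if t = i then 1 else if t = j then -1 else 0) then (1:ℝ) else 0) := by
  by_cases hab : a = b
  · subst hab
    have z1 : (∑ i : Fin (d-1), if ∀ t, (a t:ℤ) - a t = (if t = i then 1 else 0) then (1:ℝ) else 0) = 0 :=
      Finset.sum_eq_zero fun i _ => by
        rw [if_neg]
        intro h
        have := h i
        rw [if_pos rfl] at this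
        omega
    have z2 : (∑ i : Fin (d-1), if ∀ t, (a t:ℤ) - a t = (if t = i then -1 else 0) then (1:ℝ) else 0) = 0 :=
      Finset.sum_eq_zero fun i _ => by
        rw [if_neg]
        intro h
        have := h i
        rw [if_pos rfl] at this
        omega
    have z3 : (∑ i : Fin (d-1), ∑ j : Fin (d-1), if i ≠ j ∧ ∀ t, (a t:ℤ) - a t
            = (if t = i then 1 else if t = j then -1 else 0) then (1:ℝ) else 0) = 0 :=
      Finset.sum_eq_zero fun i _ => Finset.sum_eq_zero fun j _ => by
        rw [if_neg]
        rintro ⟨hij, h⟩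
        have := h i
        rw [if_pos rfl] at this
        omega
    rw [z1, z2, z3]
    unfold score
    rw [if_pos rfl, if_pos rfl]
    ring
  · unfold score
    rw [if_neg hab, if_neg hab]
    by_cases hP : (∃ i, ∀ t, (a t : ℤ) - (b t : ℤ) = if t = i then 1 else 0)
      ∨ (∃ i, ∀ t, (a t : ℤ) - (b t : ℤ) = if t = i then -1 else 0)
      ∨ (∃ i j, i ≠ j ∧ ∀ t, (a t : ℤ) - (b t : ℤ)
            = if t = i then 1 else if t = j then -1 else 0)
    · rw [if_pos hP]
      rcases hP with ⟨i, hi⟩ | ⟨i, hi⟩ | ⟨i, j, hij, hj⟩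
      · have hS1 : (∑ i' : Fin (d-1), if ∀ t, (a t:ℤ) - b t = (if t = i' then 1 else 0) then (1:ℝ) else 0) = 1 := by
          rw [Finset.sum_eq_single_of_mem i (Finset.mem_univ i) ?_, if_pos hi]
          intro i' _ hne
          rw [if_neg]
          intro h'
          have e1 := hi i'
          rw [if_neg hne] at e1
          have e2 := h' i'
          rw [if_pos rfl] at e2
          omega
        have hS2 : (∑ i' : Fin (d-1), if ∀ t, (a t:ℤ) - b t = (if t = i' then -1 else 0) then (1:ℝ) else 0) = 0 :=
          Finset.sum_eq_zero fun i' _ => by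
            rw [if_neg]
            intro h'
            have e1 := hi i
            rw [if_pos rfl] at e1
            have e2 := h' i
            by_cases hii : i = i'
            · rw [if_pos hii] at e2; omega
            · rw [if_neg hii] at e2; omega
        have hS3 : (∑ i' : Fin (d-1), ∑ j' : Fin (d-1), if i' ≠ j' ∧ ∀ t, (a t:ℤ) - b t
            = (if t = i' then 1 else if t = j' then -1 else 0) then (1:ℝ) else 0) = 0 :=
          Finset.sum_eq_zero fun i' _ => Finset.sum_eq_zero fun j' _ => by
            rw [if_neg]
            rintro ⟨hij', h'⟩
            have e2 := h' j'
            rw [if_neg (fun hh => hij' hh.symm), if_pos rfl] at e2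
            have e1 := hi j'
            by_cases hji : j' = i
            · rw [if_pos hji] at e1; omega
            · rw [if_neg hji] at e1; omega
        rw [hS1, hS2, hS3]; ring
      · have hS1 : (∑ i' : Fin (d-1), if ∀ t, (a t:ℤ) - b t = (if t = i' then 1 else 0) then (1:ℝ) else 0) = 0 :=
          Finset.sum_eq_zero fun i' _ => by
            rw [if_neg]
            intro h'
            have e1 := h' i'
            rw [if_pos rfl] at e1
            have e2 := hi i'
            by_cases hii : i' = i
            · rw [if_pos hii] at e2; omega
            · rw [if_neg hii] at e2; omega
        have hS2 : (∑ i' : Fin (d-1), if ∀ t, (a t:ℤ) - b t = (if t = i' then -1 else 0) then (1:ℝ) else 0) = 1 := by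
          rw [Finset.sum_eq_single_of_mem i (Finset.mem_univ i) ?_, if_pos hi]
          intro i' _ hne
          rw [if_neg]
          intro h'
          have e1 := hi i'
          rw [if_neg hne] at e1
          have e2 := h' i'
          rw [if_pos rfl] at e2
          omega
        have hS3 : (∑ i' : Fin (d-1), ∑ j' : Fin (d-1), if i' ≠ j' ∧ ∀ t, (a t:ℤ) - b t
            = (if t = i' then 1 else if t = j' then -1 else 0) then (1:ℝ) else 0) = 0 :=
          Finset.sum_eq_zero fun i' _ => Finset.sum_eq_zero fun j' _ => by
            rw [if_neg]
            rintro ⟨hij', h'⟩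
            have e2 := h' i'
            rw [if_pos rfl] at e2
            have e1 := hi i'
            by_cases hii : i' = i
            · rw [if_pos hii] at e1; omega
            · rw [if_neg hii] at e1; omega
        rw [hS1, hS2, hS3]; ring
      · have hS1 : (∑ i' : Fin (d-1), if ∀ t, (a t:ℤ) - b t = (if t = i' then 1 else 0) then (1:ℝ) else 0) = 0 :=
          Finset.sum_eq_zero fun i' _ => by
            rw [if_neg]
            intro h'
            have e1 := hj j
            rw [if_neg (fun hh => hij hh.symm), if_pos rfl] at e1
            have e2 := h' j
            by_cases hji : j = i'
            · rw [if_pos hji] at e2; omega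
            · rw [if_neg hji] at e2; omega
        have hS2 : (∑ i' : Fin (d-1), if ∀ t, (a t:ℤ) - b t = (if t = i' then -1 else 0) then (1:ℝ) else 0) = 0 :=
          Finset.sum_eq_zero fun i' _ => by
            rw [if_neg]
            intro h'
            have e1 := hj i
            rw [if_pos rfl] at e1
            have e2 := h' i
            by_cases hii : i = i'
            · rw [if_pos hii] at e2; omega
            · rw [if_neg hii] at e2; omega
        have hS3 : (∑ i' : Fin (d-1), ∑ j' : Fin (d-1), if i' ≠ j' ∧ ∀ t, (a t:ℤ) - b t
            = (if t = i' then 1 else if t = j' then -1 else 0) then (1:ℝ) else 0) = 1 := by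
          rw [Finset.sum_eq_single_of_mem i (Finset.mem_univ i) ?_,
            Finset.sum_eq_single_of_mem j (Finset.mem_univ j) ?_, if_pos ⟨hij, hj⟩]
          · intro j' _ hne
            rw [if_neg]
            rintro ⟨hij2, h'⟩
            have e1 := hj j
            rw [if_neg (fun hh => hij hh.symm), if_pos rfl] at e1
            have e2 := h' j
            rw [if_neg (fun hh => hij hh.symm), if_neg (fun hh => hne (hh.symm))] at e2
            omega
          · intro i' _ hne
            apply Finset.sum_eq_zero
            intro j' _
            rw [if_neg]
            rintro ⟨hij2, h'⟩
            have e1 := hj i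
            rw [if_pos rfl] at e1
            have e2 := h' i
            rw [if_neg (fun hh => hne (hh.symm))] at e2
            by_cases hji : i = j'
            · rw [if_pos hji] at e2; omega
            · rw [if_neg hji] at e2; omega
        rw [hS1, hS2, hS3]; ring
    · rw [if_neg hP]
      have hS1 : (∑ i : Fin (d-1), if ∀ t, (a t:ℤ) - b t = (if t = i then 1 else 0) then (1:ℝ) else 0) = 0 :=
        Finset.sum_eq_zero fun i _ => if_neg fun h => hP (Or.inl ⟨i, h⟩)
      have hS2 : (∑ i : Fin (d-1), if ∀ t, (a t:ℤ) - b t = (if t = i then -1 else 0) then (1:ℝ) else 0) = 0 :=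
        Finset.sum_eq_zero fun i _ => if_neg fun h => hP (Or.inr (Or.inl ⟨i, h⟩))
      have hS3 : (∑ i : Fin (d-1), ∑ j : Fin (d-1), if i ≠ j ∧ ∀ t, (a t:ℤ) - b t
            = (if t = i then 1 else if t = j then -1 else 0) then (1:ℝ) else 0) = 0 :=
        Finset.sum_eq_zero fun i _ => Finset.sum_eq_zero fun j _ =>
          if_neg fun ⟨hij, h⟩ => hP (Or.inr (Or.inr ⟨i, j, hij, h⟩))
      rw [hS1, hS2, hS3]; ring

end Comb
section Eval

variable {d N : ℕ}

lemma sqrt_prodDist (d N : ℕ) (lam : Fin (d-1) → ℕ) :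
    Real.sqrt (prodDist d N lam) = ∏ t, rEF N (lam t) := by
  unfold prodDist rEF
  have h1 : (∏ t : Fin (d-1), Real.sqrt (sineDist N (lam t))) ^ 2
      = ∏ t : Fin (d-1), sineDist N (lam t) := by
    rw [← Finset.prod_pow]
    exact Finset.prod_congr rfl fun t _ => Real.sq_sqrt (sineDist_nonneg _ _)
  rw [← h1, Real.sqrt_sq (Finset.prod_nonneg fun t _ => Real.sqrt_nonneg _)]

lemma sum_piFinset_prod (d N : ℕ) (f : Fin (d-1) → ℕ → ℝ) :
    ∑ lam ∈ Fintype.piFinset (fun _ : Fin (d-1) => range N), ∏ t, f t (lam t)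
      = ∏ t : Fin (d-1), ∑ k ∈ range N, f t k := (Finset.prod_univ_sum _ _).symm

lemma sum_gfEF (hN : 2 ≤ N) : ∑ k ∈ range N, gfEF N k = 1 := by
  unfold gfEF
  rw [Finset.sum_congr rfl fun k _ => rEF_sq N k]
  exact sum_sineDist N hN

lemma sum_hpEF : ∑ k ∈ range N, hpEF N k = BEF N := by
  have hsub : range (N - 1) ⊆ range N := Finset.range_subset_range.2 (Nat.sub_le N 1)
  have hv : ∀ k ∈ range N, k ∉ range (N - 1) → hpEF N k = 0 := by
    intro k hk hnk
    rw [Finset.mem_range] at hk hnk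
    exact if_neg (by omega)
  rw [← Finset.sum_subset hsub hv]
  unfold BEF
  refine Finset.sum_congr rfl fun k hk => ?_
  rw [Finset.mem_range] at hk
  exact if_pos (by omega)

lemma sum_hmEF (hN : 1 ≤ N) : ∑ k ∈ range N, hmEF N k = BEF N := by
  obtain ⟨M, rfl⟩ : ∃ M, N = M + 1 := ⟨N - 1, by omega⟩
  rw [Finset.sum_range_succ' (hmEF (M + 1)) M]
  have h0 : hmEF (M+1) 0 = 0 := if_neg (by omega)
  have hk : ∀ k, hmEF (M+1) (k+1) = rEF (M+1) k * rEF (M+1) (k+1) := by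
    intro k
    unfold hmEF
    rw [if_pos (by omega), Nat.add_sub_cancel, mul_comm]
  rw [h0, add_zero, Finset.sum_congr rfl fun k _ => hk k]
  unfold BEF
  rw [Nat.add_sub_cancel]

lemma Td_eval (d N : ℕ) (hN : 2 ≤ N) :
    ∑ lam ∈ Fintype.piFinset (fun _ : Fin (d-1) => range N),
      ∑ lam' ∈ Fintype.piFinset (fun _ : Fin (d-1) => range N),
        (∏ t, rEF N (lam t)) * (∏ t, rEF N (lam' t)) * (if lam = lam' then (d:ℝ) else 0)
    = d := by
  have hinner : ∀ lam ∈ Fintype.piFinset (fun _ : Fin (d-1) => range N),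
      ∑ lam' ∈ Fintype.piFinset (fun _ : Fin (d-1) => range N),
        (∏ t, rEF N (lam t)) * (∏ t, rEF N (lam' t)) * (if lam = lam' then (d:ℝ) else 0)
      = (d:ℝ) * ∏ t, gfEF N (lam t) := by
    intro lam hlam
    have hcong : ∀ lam' ∈ Fintype.piFinset (fun _ : Fin (d-1) => range N),
        (∏ t, rEF N (lam t)) * (∏ t, rEF N (lam' t)) * (if lam = lam' then (d:ℝ) else 0)
        = if lam' = lam then (d:ℝ) * ((∏ t, rEF N (lam t)) * (∏ t, rEF N (lam' t))) else 0 := by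
      intro lam' _
      by_cases h : lam = lam'
      · rw [if_pos h, if_pos h.symm]; ring
      · rw [if_neg h, if_neg (fun hh => h hh.symm), mul_zero]
    rw [Finset.sum_congr rfl hcong, Finset.sum_ite_eq' _ lam _, if_pos hlam]
    unfold gfEF
    rw [← Finset.prod_mul_distrib]
  rw [Finset.sum_congr rfl hinner, ← Finset.mul_sum, sum_piFinset_prod]
  rw [Finset.prod_congr rfl fun t _ => sum_gfEF hN]
  simp

lemma Tp_eval (d N : ℕ) (hN : 2 ≤ N) (i : Fin (d-1)) :
    ∑ lam ∈ Fintype.piFinset (fun _ : Fin (d-1) => range N),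
      ∑ lam' ∈ Fintype.piFinset (fun _ : Fin (d-1) => range N),
        (∏ t, rEF N (lam t)) * (∏ t, rEF N (lam' t)) *
          (if ∀ t, (lam t : ℤ) - lam' t = (if t = i then 1 else 0) then (1:ℝ) else 0)
    = BEF N := by
  have hstep : ∀ lam ∈ Fintype.piFinset (fun _ : Fin (d-1) => range N),
      ∑ lam' ∈ Fintype.piFinset (fun _ : Fin (d-1) => range N),
        (∏ t, rEF N (lam t)) * (∏ t, rEF N (lam' t)) *
          (if ∀ t, (lam t : ℤ) - lam' t = (if t = i then 1 else 0) then (1:ℝ) else 0)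
      = ∏ t, Function.update (fun _ : Fin (d-1) => gfEF N) i (hmEF N) t (lam t) := by
    intro lam hlam
    by_cases h1 : 1 ≤ lam i
    · set u : Fin (d-1) → ℕ := Function.update lam i (lam i - 1) with hu
      have hmem : u ∈ Fintype.piFinset (fun _ : Fin (d-1) => range N) := by
        rw [Fintype.mem_piFinset] at hlam ⊢
        intro t
        rcases eq_or_ne t i with rfl | hne
        · rw [hu, Function.update_self, Finset.mem_range]
          have := hlam t
          rw [Finset.mem_range] at this
          omega
        · rw [hu, Function.update_of_ne hne]
          exact hlam t
      have hcond : ∀ lam' : Fin (d-1) → ℕ,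
          (∀ t, (lam t : ℤ) - lam' t = (if t = i then 1 else 0)) ↔ lam' = u := by
        intro lam'
        rw [cp_iff i lam lam']
        exact and_iff_right h1
      have hcong : ∀ lam' ∈ Fintype.piFinset (fun _ : Fin (d-1) => range N),
          (∏ t, rEF N (lam t)) * (∏ t, rEF N (lam' t)) *
            (if ∀ t, (lam t : ℤ) - lam' t = (if t = i then 1 else 0) then (1:ℝ) else 0)
          = if lam' = u then (∏ t, rEF N (lam t)) * (∏ t, rEF N (lam' t)) else 0 := by
        intro lam' _
        by_cases hc : lam' = u
        · rw [if_pos ((hcond lam').2 hc), if_pos hc, mul_one]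
        · rw [if_neg (fun hh => hc ((hcond lam').1 hh)), if_neg hc, mul_zero]
      rw [Finset.sum_congr rfl hcong, Finset.sum_ite_eq' _ u _, if_pos hmem,
        ← Finset.prod_mul_distrib]
      refine Finset.prod_congr rfl fun t _ => ?_
      rcases eq_or_ne t i with rfl | hne
      · rw [hu, Function.update_self, Function.update_self]
        unfold hmEF
        rw [if_pos h1]
      · rw [hu, Function.update_of_ne hne, Function.update_of_ne hne]
        rfl
    · have hz : ∏ t, Function.update (fun _ : Fin (d-1) => gfEF N) i (hmEF N) t (lam t) = 0 :=
        Finset.prod_eq_zero (Finset.mem_univ i) (by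
          rw [Function.update_self]
          exact if_neg h1)
      rw [hz]
      refine Finset.sum_eq_zero fun lam' _ => ?_
      rw [if_neg (fun h => h1 ((cp_iff i lam lam').1 h).1), mul_zero]
  rw [Finset.sum_congr rfl hstep, sum_piFinset_prod]
  rw [Finset.prod_eq_single_of_mem i (Finset.mem_univ i) ?_]
  · rw [Function.update_self]
    exact sum_hmEF (by omega)
  · intro t _ hne
    rw [Function.update_of_ne hne]
    exact sum_gfEF hN

lemma Tm_eval (d N : ℕ) (hN : 2 ≤ N) (i : Fin (d-1)) :
    ∑ lam ∈ Fintype.piFinset (fun _ : Fin (d-1) => range N),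
      ∑ lam' ∈ Fintype.piFinset (fun _ : Fin (d-1) => range N),
        (∏ t, rEF N (lam t)) * (∏ t, rEF N (lam' t)) *
          (if ∀ t, (lam t : ℤ) - lam' t = (if t = i then -1 else 0) then (1:ℝ) else 0)
    = BEF N := by
  have hstep : ∀ lam ∈ Fintype.piFinset (fun _ : Fin (d-1) => range N),
      ∑ lam' ∈ Fintype.piFinset (fun _ : Fin (d-1) => range N),
        (∏ t, rEF N (lam t)) * (∏ t, rEF N (lam' t)) *
          (if ∀ t, (lam t : ℤ) - lam' t = (if t = i then -1 else 0) then (1:ℝ) else 0)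
      = ∏ t, Function.update (fun _ : Fin (d-1) => gfEF N) i (hpEF N) t (lam t) := by
    intro lam hlam
    set u : Fin (d-1) → ℕ := Function.update lam i (lam i + 1) with hu
    by_cases h1 : lam i + 1 < N
    · have hmem : u ∈ Fintype.piFinset (fun _ : Fin (d-1) => range N) := by
        rw [Fintype.mem_piFinset] at hlam ⊢
        intro t
        rcases eq_or_ne t i with rfl | hne
        · rw [hu, Function.update_self, Finset.mem_range]
          omega
        · rw [hu, Function.update_of_ne hne]
          exact hlam t
      have hcong : ∀ lam' ∈ Fintype.piFinset (fun _ : Fin (d-1) => range N),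
          (∏ t, rEF N (lam t)) * (∏ t, rEF N (lam' t)) *
            (if ∀ t, (lam t : ℤ) - lam' t = (if t = i then -1 else 0) then (1:ℝ) else 0)
          = if lam' = u then (∏ t, rEF N (lam t)) * (∏ t, rEF N (lam' t)) else 0 := by
        intro lam' _
        by_cases hc : lam' = u
        · rw [if_pos ((cm_iff i lam lam').2 hc), if_pos hc, mul_one]
        · rw [if_neg (fun hh => hc ((cm_iff i lam lam').1 hh)), if_neg hc, mul_zero]
      rw [Finset.sum_congr rfl hcong, Finset.sum_ite_eq' _ u _, if_pos hmem,
        ← Finset.prod_mul_distrib]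
      refine Finset.prod_congr rfl fun t _ => ?_
      rcases eq_or_ne t i with rfl | hne
      · rw [hu, Function.update_self, Function.update_self]
        unfold hpEF
        rw [if_pos h1]
      · rw [hu, Function.update_of_ne hne, Function.update_of_ne hne]
        rfl
    · have hz : ∏ t, Function.update (fun _ : Fin (d-1) => gfEF N) i (hpEF N) t (lam t) = 0 :=
        Finset.prod_eq_zero (Finset.mem_univ i) (by
          rw [Function.update_self]
          exact if_neg h1)
      rw [hz]
      refine Finset.sum_eq_zero fun lam' hlam' => ?_
      rw [if_neg, mul_zero]
      intro h
      have hu' := (cm_iff i lam lam').1 h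
      rw [hu'] at hlam'
      rw [Fintype.mem_piFinset] at hlam'
      have := hlam' i
      rw [Function.update_self, Finset.mem_range] at this
      omega
  rw [Finset.sum_congr rfl hstep, sum_piFinset_prod]
  rw [Finset.prod_eq_single_of_mem i (Finset.mem_univ i) ?_]
  · rw [Function.update_self]
    exact sum_hpEF
  · intro t _ hne
    rw [Function.update_of_ne hne]
    exact sum_gfEF hN

end Eval
section Final

lemma Tpm_eval (d N : ℕ) (hN : 2 ≤ N) {i j : Fin (d-1)} (hij : i ≠ j) :
    ∑ lam ∈ Fintype.piFinset (fun _ : Fin (d-1) => range N),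
      ∑ lam' ∈ Fintype.piFinset (fun _ : Fin (d-1) => range N),
        (∏ t, rEF N (lam t)) * (∏ t, rEF N (lam' t)) *
          (if ∀ t, (lam t : ℤ) - lam' t = (if t = i then 1 else if t = j then -1 else 0)
            then (1:ℝ) else 0)
    = BEF N ^ 2 := by
  have hstep : ∀ lam ∈ Fintype.piFinset (fun _ : Fin (d-1) => range N),
      ∑ lam' ∈ Fintype.piFinset (fun _ : Fin (d-1) => range N),
        (∏ t, rEF N (lam t)) * (∏ t, rEF N (lam' t)) *
          (if ∀ t, (lam t : ℤ) - lam' t = (if t = i then 1 else if t = j then -1 else 0)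
            then (1:ℝ) else 0)
      = ∏ t, Function.update (Function.update (fun _ : Fin (d-1) => gfEF N) i (hmEF N)) j
          (hpEF N) t (lam t) := by
    intro lam hlam
    by_cases h1 : 1 ≤ lam i
    · by_cases h2 : lam j + 1 < N
      · set u : Fin (d-1) → ℕ :=
          Function.update (Function.update lam i (lam i - 1)) j (lam j + 1) with hu
        have hmem : u ∈ Fintype.piFinset (fun _ : Fin (d-1) => range N) := by
          rw [Fintype.mem_piFinset] at hlam ⊢
          intro t
          rcases eq_or_ne t j with rfl | hnej
          · rw [hu, Function.update_self, Finset.mem_range]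
            omega
          · rw [hu, Function.update_of_ne hnej]
            rcases eq_or_ne t i with rfl | hnei
            · rw [Function.update_self, Finset.mem_range]
              have := hlam t
              rw [Finset.mem_range] at this
              omega
            · rw [Function.update_of_ne hnei]
              exact hlam t
        have hcond : ∀ lam' : Fin (d-1) → ℕ,
            (∀ t, (lam t : ℤ) - lam' t = (if t = i then 1 else if t = j then -1 else 0))
              ↔ lam' = u := by
          intro lam'
          rw [cpm_iff hij lam lam']
          exact and_iff_right h1
        have hcong : ∀ lam' ∈ Fintype.piFinset (fun _ : Fin (d-1) => range N),
            (∏ t, rEF N (lam t)) * (∏ t, rEF N (lam' t)) *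
              (if ∀ t, (lam t : ℤ) - lam' t = (if t = i then 1 else if t = j then -1 else 0)
                then (1:ℝ) else 0)
            = if lam' = u then (∏ t, rEF N (lam t)) * (∏ t, rEF N (lam' t)) else 0 := by
          intro lam' _
          by_cases hc : lam' = u
          · rw [if_pos ((hcond lam').2 hc), if_pos hc, mul_one]
          · rw [if_neg (fun hh => hc ((hcond lam').1 hh)), if_neg hc, mul_zero]
        rw [Finset.sum_congr rfl hcong, Finset.sum_ite_eq' _ u _, if_pos hmem,
          ← Finset.prod_mul_distrib]
        refine Finset.prod_congr rfl fun t _ => ?_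
        rcases eq_or_ne t j with rfl | hnej
        · rw [hu, Function.update_self, Function.update_self]
          unfold hpEF
          rw [if_pos h2]
        · rw [hu, Function.update_of_ne hnej, Function.update_of_ne hnej]
          rcases eq_or_ne t i with rfl | hnei
          · rw [Function.update_self, Function.update_self]
            unfold hmEF
            rw [if_pos h1]
          · rw [Function.update_of_ne hnei, Function.update_of_ne hnei]
            rfl
      · have hz : ∏ t, Function.update (Function.update (fun _ : Fin (d-1) => gfEF N) i
            (hmEF N)) j (hpEF N) t (lam t) = 0 :=
          Finset.prod_eq_zero (Finset.mem_univ j) (by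
            rw [Function.update_self]
            exact if_neg h2)
        rw [hz]
        refine Finset.sum_eq_zero fun lam' hlam' => ?_
        rw [if_neg, mul_zero]
        intro h
        obtain ⟨-, hu'⟩ := (cpm_iff hij lam lam').1 h
        rw [hu'] at hlam'
        rw [Fintype.mem_piFinset] at hlam'
        have := hlam' j
        rw [Function.update_self, Finset.mem_range] at this
        omega
    · have hz : ∏ t, Function.update (Function.update (fun _ : Fin (d-1) => gfEF N) i
          (hmEF N)) j (hpEF N) t (lam t) = 0 :=
        Finset.prod_eq_zero (Finset.mem_univ i) (by
          rw [Function.update_of_ne hij, Function.update_self]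
          exact if_neg h1)
      rw [hz]
      refine Finset.sum_eq_zero fun lam' _ => ?_
      rw [if_neg (fun h => h1 ((cpm_iff hij lam lam').1 h).1), mul_zero]
  rw [Finset.sum_congr rfl hstep, sum_piFinset_prod]
  rw [← Finset.mul_prod_erase univ _ (Finset.mem_univ j),
    ← Finset.mul_prod_erase _ _ (Finset.mem_erase.2 ⟨hij, Finset.mem_univ i⟩)]
  have hj' : ∑ k ∈ range N, Function.update (Function.update (fun _ : Fin (d-1) => gfEF N) i
      (hmEF N)) j (hpEF N) j k = BEF N := by
    rw [Function.update_self]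
    exact sum_hpEF
  have hi' : ∑ k ∈ range N, Function.update (Function.update (fun _ : Fin (d-1) => gfEF N) i
      (hmEF N)) j (hpEF N) i k = BEF N := by
    rw [Function.update_of_ne hij, Function.update_self]
    exact sum_hmEF (by omega)
  have hrest : ∏ t ∈ (univ.erase j).erase i, (∑ k ∈ range N,
      Function.update (Function.update (fun _ : Fin (d-1) => gfEF N) i (hmEF N)) j
        (hpEF N) t k) = 1 := by
    refine Finset.prod_eq_one fun t ht => ?_
    obtain ⟨hti, htj'⟩ := Finset.mem_erase.1 ht
    obtain ⟨htj, -⟩ := Finset.mem_erase.1 htj'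
    rw [Function.update_of_ne htj, Function.update_of_ne hti]
    exact sum_gfEF hN
  rw [hj', hi', hrest]
  ring

lemma key_sum (d N : ℕ) (hd : 2 ≤ d) (hN : 2 ≤ N) :
    ∑ lam ∈ Fintype.piFinset (fun _ : Fin (d-1) => range N),
      ∑ lam' ∈ Fintype.piFinset (fun _ : Fin (d-1) => range N),
        Real.sqrt (prodDist d N lam) * Real.sqrt (prodDist d N lam') * score d lam lam'
    = (d:ℝ) + 2 * ((d:ℝ) - 1) * BEF N + ((d:ℝ) - 1) * ((d:ℝ) - 2) * BEF N ^ 2 := by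
  have hpt : ∀ lam ∈ Fintype.piFinset (fun _ : Fin (d-1) => range N),
      ∀ lam' ∈ Fintype.piFinset (fun _ : Fin (d-1) => range N),
      Real.sqrt (prodDist d N lam) * Real.sqrt (prodDist d N lam') * score d lam lam'
      = (∏ t, rEF N (lam t)) * (∏ t, rEF N (lam' t)) * (if lam = lam' then (d:ℝ) else 0)
        + (∑ i : Fin (d-1), (∏ t, rEF N (lam t)) * (∏ t, rEF N (lam' t)) *
            (if ∀ t, (lam t:ℤ) - lam' t = (if t = i then 1 else 0) then (1:ℝ) else 0))
        + (∑ i : Fin (d-1), (∏ t, rEF N (lam t)) * (∏ t, rEF N (lam' t)) *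
            (if ∀ t, (lam t:ℤ) - lam' t = (if t = i then -1 else 0) then (1:ℝ) else 0))
        + (∑ i : Fin (d-1), ∑ j : Fin (d-1), (∏ t, rEF N (lam t)) * (∏ t, rEF N (lam' t)) *
            (if i ≠ j ∧ ∀ t, (lam t:ℤ) - lam' t
              = (if t = i then 1 else if t = j then -1 else 0) then (1:ℝ) else 0)) := by
    intro lam _ lam' _
    rw [sqrt_prodDist, sqrt_prodDist, score_eq]
    simp only [mul_add, Finset.mul_sum]
  rw [Finset.sum_congr rfl fun lam hlam => Finset.sum_congr rfl fun lam' hlam' =>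
    hpt lam hlam lam' hlam']
  rw [Finset.sum_congr rfl fun lam _ => by
    rw [Finset.sum_add_distrib, Finset.sum_add_distrib, Finset.sum_add_distrib]]
  rw [Finset.sum_add_distrib, Finset.sum_add_distrib, Finset.sum_add_distrib]
  have hcast : ((d - 1 : ℕ) : ℝ) = (d:ℝ) - 1 := by
    have h1 : 1 ≤ d := by omega
    push_cast [h1]
    ring
  have hD0 := Td_eval d N hN
  have hD1 : ∑ lam ∈ Fintype.piFinset (fun _ : Fin (d-1) => range N),
      ∑ lam' ∈ Fintype.piFinset (fun _ : Fin (d-1) => range N),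
      ∑ i : Fin (d-1), (∏ t, rEF N (lam t)) * (∏ t, rEF N (lam' t)) *
            (if ∀ t, (lam t:ℤ) - lam' t = (if t = i then 1 else 0) then (1:ℝ) else 0)
      = ((d:ℝ) - 1) * BEF N := by
    rw [Finset.sum_congr rfl fun lam _ => Finset.sum_comm, Finset.sum_comm,
      Finset.sum_congr rfl fun i _ => Tp_eval d N hN i, Finset.sum_const, Finset.card_univ,
      Fintype.card_fin, nsmul_eq_mul, hcast]
  have hD2 : ∑ lam ∈ Fintype.piFinset (fun _ : Fin (d-1) => range N),
      ∑ lam' ∈ Fintype.piFinset (fun _ : Fin (d-1) => range N),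
      ∑ i : Fin (d-1), (∏ t, rEF N (lam t)) * (∏ t, rEF N (lam' t)) *
            (if ∀ t, (lam t:ℤ) - lam' t = (if t = i then -1 else 0) then (1:ℝ) else 0)
      = ((d:ℝ) - 1) * BEF N := by
    rw [Finset.sum_congr rfl fun lam _ => Finset.sum_comm, Finset.sum_comm,
      Finset.sum_congr rfl fun i _ => Tm_eval d N hN i, Finset.sum_const, Finset.card_univ,
      Fintype.card_fin, nsmul_eq_mul, hcast]
  have hD3 : ∑ lam ∈ Fintype.piFinset (fun _ : Fin (d-1) => range N),
      ∑ lam' ∈ Fintype.piFinset (fun _ : Fin (d-1) => range N),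
      ∑ i : Fin (d-1), ∑ j : Fin (d-1), (∏ t, rEF N (lam t)) * (∏ t, rEF N (lam' t)) *
            (if i ≠ j ∧ ∀ t, (lam t:ℤ) - lam' t
              = (if t = i then 1 else if t = j then -1 else 0) then (1:ℝ) else 0)
      = ((d:ℝ) - 1) * (((d:ℝ) - 1) * BEF N ^ 2 - BEF N ^ 2) := by
    rw [Finset.sum_congr rfl fun lam _ => Finset.sum_comm, Finset.sum_comm]
    rw [Finset.sum_congr rfl fun i _ => by
      rw [Finset.sum_congr rfl fun lam _ => Finset.sum_comm, Finset.sum_comm]]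
    have hv : ∀ i j : Fin (d-1),
        ∑ lam ∈ Fintype.piFinset (fun _ : Fin (d-1) => range N),
          ∑ lam' ∈ Fintype.piFinset (fun _ : Fin (d-1) => range N),
          (∏ t, rEF N (lam t)) * (∏ t, rEF N (lam' t)) *
            (if i ≠ j ∧ ∀ t, (lam t:ℤ) - lam' t
              = (if t = i then 1 else if t = j then -1 else 0) then (1:ℝ) else 0)
        = if i = j then 0 else BEF N ^ 2 := by
      intro i j
      by_cases hij : i = j
      · rw [if_pos hij]
        refine Finset.sum_eq_zero fun lam _ => Finset.sum_eq_zero fun lam' _ => ?_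
        rw [if_neg (fun hh => hh.1 hij), mul_zero]
      · rw [if_neg hij]
        have : ∀ lam lam' : Fin (d-1) → ℕ,
            (if i ≠ j ∧ ∀ t, (lam t:ℤ) - lam' t
              = (if t = i then 1 else if t = j then -1 else 0) then (1:ℝ) else 0)
            = (if ∀ t, (lam t:ℤ) - lam' t
              = (if t = i then 1 else if t = j then -1 else 0) then (1:ℝ) else 0) := by
          intro lam lam'
          exact if_congr (and_iff_right hij) rfl rfl
        rw [Finset.sum_congr rfl fun lam _ => Finset.sum_congr rfl fun lam' _ => by
          rw [this lam lam']]
        exact Tpm_eval d N hN hij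
    rw [Finset.sum_congr rfl fun i _ => Finset.sum_congr rfl fun j _ => hv i j]
    have hrow : ∀ i : Fin (d-1), ∑ j : Fin (d-1), (if i = j then (0:ℝ) else BEF N ^ 2)
        = ((d:ℝ) - 1) * BEF N ^ 2 - BEF N ^ 2 := by
      intro i
      have hsplit : ∀ j : Fin (d-1), (if i = j then (0:ℝ) else BEF N ^ 2)
          = BEF N ^ 2 - (if i = j then BEF N ^ 2 else 0) := by
        intro j
        by_cases h : i = j
        · simp [h]
        · simp [h]
      rw [Finset.sum_congr rfl fun j _ => hsplit j, Finset.sum_sub_distrib,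
        Finset.sum_const, Finset.card_univ, Fintype.card_fin, nsmul_eq_mul, hcast,
        Finset.sum_ite_eq univ i fun _ => BEF N ^ 2, if_pos (Finset.mem_univ i)]
    rw [Finset.sum_congr rfl fun i _ => hrow i, Finset.sum_const, Finset.card_univ,
      Fintype.card_fin, nsmul_eq_mul, hcast]
  rw [hD0, hD1, hD2, hD3]
  ring

end Final


/-- Lemma 3 of the appendix: the entanglement fidelity `(1/d²) q^T S q` of the covariant
gate-estimation protocol specified by the product distribution `q` is at least
`1 − 2π²(d−1)²/(d²N²)`. -/
theorem entanglement_fidelity_bound (d N : ℕ) (hd : 2 ≤ d) (hN : 1 ≤ N) :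
    1 - 2 * Real.pi ^ 2 * ((d : ℝ) - 1) ^ 2 / ((d : ℝ) ^ 2 * (N : ℝ) ^ 2)
    ≤ (1 / (d : ℝ) ^ 2) *
      ∑ lam ∈ Fintype.piFinset fun _ : Fin (d - 1) => Finset.range N,
        ∑ lam' ∈ Fintype.piFinset fun _ : Fin (d - 1) => Finset.range N,
          Real.sqrt (prodDist d N lam) * Real.sqrt (prodDist d N lam') * score d lam lam' := by
  have hd2 : (2:ℝ) ≤ (d:ℝ) := by exact_mod_cast hd
  have hdpos : (0:ℝ) < (d:ℝ) := by linarith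
  have hNpos : (0:ℝ) < (N:ℝ) := by exact_mod_cast hN
  rcases Nat.lt_or_ge N 2 with hN1 | hN2
  · -- N = 1 : the right-hand side is nonpositive
    have hsum_nonneg : 0 ≤ ∑ lam ∈ Fintype.piFinset fun _ : Fin (d - 1) => Finset.range N,
        ∑ lam' ∈ Fintype.piFinset fun _ : Fin (d - 1) => Finset.range N,
          Real.sqrt (prodDist d N lam) * Real.sqrt (prodDist d N lam') * score d lam lam' := by
      refine Finset.sum_nonneg fun lam _ => Finset.sum_nonneg fun lam' _ => ?_
      have hsc : 0 ≤ score d lam lam' := by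
        unfold score
        split_ifs
        · positivity
        · norm_num
        · norm_num
      exact mul_nonneg (mul_nonneg (Real.sqrt_nonneg _) (Real.sqrt_nonneg _)) hsc
    have hR : 1 - 2 * Real.pi ^ 2 * ((d : ℝ) - 1) ^ 2 / ((d : ℝ) ^ 2 * (N : ℝ) ^ 2) ≤ 0 := by
      have hN1' : N = 1 := by omega
      subst hN1'
      rw [sub_nonpos]
      rw [le_div_iff₀ (by positivity)]
      have hπ := Real.pi_gt_three
      have h9 : (0:ℝ) ≤ Real.pi ^ 2 - 9 := by nlinarith
      have hfac : (0:ℝ) ≤ (Real.pi ^ 2 - 9) * ((d:ℝ) - 1) ^ 2 :=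
        mul_nonneg h9 (sq_nonneg _)
      push_cast
      nlinarith [sq_nonneg ((d:ℝ) - 2)]
    calc 1 - 2 * Real.pi ^ 2 * ((d : ℝ) - 1) ^ 2 / ((d : ℝ) ^ 2 * (N : ℝ) ^ 2) ≤ 0 := hR
      _ ≤ _ := mul_nonneg (by positivity) hsum_nonneg
  · -- N ≥ 2 : use the exact evaluation
    rw [key_sum d N hd hN2]
    have hB := B_ge N hN2
    set B := BEF N with hBdef
    have hmain : (d:ℝ)^2 - 2 * Real.pi ^ 2 * ((d:ℝ) - 1)^2 / (N:ℝ)^2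
        ≤ (d:ℝ) + 2 * ((d:ℝ) - 1) * B + ((d:ℝ) - 1) * ((d:ℝ) - 2) * B^2 := by
      have h1 : (d:ℝ)^2 - ((d:ℝ) + 2*((d:ℝ)-1)*B + ((d:ℝ)-1)*((d:ℝ)-2)*B^2)
          = 2*((d:ℝ)-1)^2*(1-B) - ((d:ℝ)-1)*((d:ℝ)-2)*(1-B)^2 := by ring
      have h2 : 1 - B ≤ Real.pi ^ 2 / (N:ℝ)^2 := by linarith
      have h3 : 0 ≤ ((d:ℝ)-1)*((d:ℝ)-2)*(1-B)^2 := by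
        have hp1 : (0:ℝ) ≤ (d:ℝ) - 1 := by linarith
        have hp2 : (0:ℝ) ≤ (d:ℝ) - 2 := by linarith
        positivity
      have h4 : 2*((d:ℝ)-1)^2*(1-B) ≤ 2*((d:ℝ)-1)^2*(Real.pi^2/(N:ℝ)^2) :=
        mul_le_mul_of_nonneg_left h2 (by positivity)
      have h5 : 2*((d:ℝ)-1)^2*(Real.pi^2/(N:ℝ)^2) = 2*Real.pi^2*((d:ℝ)-1)^2/(N:ℝ)^2 := by
        ring
      linarith
    have hgoal : 1 - 2 * Real.pi ^ 2 * ((d : ℝ) - 1) ^ 2 / ((d : ℝ) ^ 2 * (N : ℝ) ^ 2)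
        = (1 / (d:ℝ)^2) * ((d:ℝ)^2 - 2 * Real.pi ^ 2 * ((d:ℝ) - 1)^2 / (N:ℝ)^2) := by
      field_simp
    rw [hgoal]
    exact mul_le_mul_of_nonneg_left hmain (by positivity)
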